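/- Let δ > 2, 0 ≤ γ < 1 − 1/δ, 0 ≤ γ' < 1 − γ, and for n > 1 set I(n) = ∫_{1/n}^1 ∫_{1/n}^1 min(1, (min(s,t))^{−γδ} (max(s,t))^{−γ'δ} n^{−δ}) ds dt. Then liminf_{n→∞} (−log I(n) / log n) > 2. -/

import Mathlib

open Filter MeasureTheory Set

lemma core_pt {a b p q s t : ℝ} (ha0 : 0 ≤ a) (hqb : q ≤ b) (hpq : a + b ≤ p + q)
    (hs : 0 < s) (hst : s ≤ t) (ht1 : t ≤ 1) :
    s ^ (-a) * t ^ (-b) ≤ s ^ (-p) * t ^ (-q) := by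
  have ht : 0 < t := hs.trans_le hst
  have hs1 : s ≤ 1 := hst.trans ht1
  have h1 : t ^ (-b) = t ^ (-q) * t ^ (-(b - q)) := by
    rw [← Real.rpow_add ht]; ring_nf
  have h2 : t ^ (-(b - q)) ≤ s ^ (-(b - q)) :=
    Real.rpow_le_rpow_of_nonpos hs hst (by linarith)
  have h3 : s ^ (-a) * s ^ (-(b - q)) = s ^ (-(a + b - q)) := by
    rw [← Real.rpow_add hs]; ring_nf
  have h4 : s ^ (-(a + b - q)) ≤ s ^ (-p) :=
    Real.rpow_le_rpow_of_exponent_ge hs hs1 (by linarith)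
  calc s ^ (-a) * t ^ (-b) = s ^ (-a) * t ^ (-(b-q)) * t ^ (-q) := by rw [h1]; ring
    _ ≤ s ^ (-a) * s ^ (-(b-q)) * t ^ (-q) := by
        apply mul_le_mul_of_nonneg_right _ (Real.rpow_nonneg ht.le _)
        exact mul_le_mul_of_nonneg_left h2 (Real.rpow_nonneg hs.le _)
    _ = s ^ (-(a + b - q)) * t ^ (-q) := by rw [h3]
    _ ≤ s ^ (-p) * t ^ (-q) :=
        mul_le_mul_of_nonneg_right h4 (Real.rpow_nonneg ht.le _)

lemma pt_bound {a b p q w s t : ℝ} (ha0 : 0 ≤ a) (hb0 : 0 ≤ b) (hqb : q ≤ b)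
    (hpq : a + b ≤ p + q) (hw : 0 ≤ w)
    (hs : 0 < s) (hs1 : s ≤ 1) (ht : 0 < t) (ht1 : t ≤ 1) :
    min 1 ((min s t) ^ (-a) * (max s t) ^ (-b) * w)
      ≤ (s ^ (-p) * t ^ (-q) + s ^ (-q) * t ^ (-p)) * w := by
  refine (min_le_right _ _).trans ?_
  apply mul_le_mul_of_nonneg_right _ hw
  rcases le_total s t with h | h
  · rw [min_eq_left h, max_eq_right h]
    refine (core_pt ha0 hqb hpq hs h ht1).trans ?_
    nlinarith [Real.rpow_nonneg hs.le (-q), Real.rpow_nonneg ht.le (-p)]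
  · rw [min_eq_right h, max_eq_left h]
    refine (core_pt ha0 hqb hpq ht h hs1).trans ?_
    nlinarith [Real.rpow_nonneg hs.le (-p), Real.rpow_nonneg ht.le (-q)]

lemma int_eq (n r : ℝ) (hn : 1 < n) (hr : 1 - r ≠ 0) :
    ∫ t in Icc (1 / n) 1, t ^ (-r) = (1 - n ^ (r - 1)) / (1 - r) := by
  have hn0 : 0 < n := lt_trans one_pos hn
  have h0n : (0:ℝ) < 1 / n := by positivity
  have hle : 1 / n ≤ 1 := by rw [div_le_one hn0]; linarith
  rw [integral_Icc_eq_integral_Ioc, ← intervalIntegral.integral_of_le hle,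
    integral_rpow (Or.inr ⟨by intro h; apply hr; linarith [neg_eq_iff_eq_neg.mp h.symm], by
      simp only [Set.uIcc_of_le hle, Set.mem_Icc]; rintro ⟨h1, -⟩; linarith⟩)]
  have h2 : (1/n) ^ (-r + 1) = n ^ (r - 1) := by
    rw [one_div, Real.inv_rpow hn0.le, ← Real.rpow_neg hn0.le]; ring_nf
  rw [Real.one_rpow, h2]
  ring_nf

lemma intA (n q : ℝ) (hn : 1 < n) (hq0 : 0 ≤ q) (hq1 : q < 1) :
    ∫ t in Icc (1 / n) 1, t ^ (-q) ≤ 1 / (1 - q) := by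
  rw [int_eq n q hn (by linarith)]
  have hn0 : (0:ℝ) < n := by linarith
  have : (0:ℝ) ≤ n ^ (q - 1) := Real.rpow_nonneg hn0.le _
  gcongr
  · linarith

lemma intB (n p : ℝ) (hn : 1 < n) (hp1 : 1 < p) :
    ∫ t in Icc (1 / n) 1, t ^ (-p) ≤ n ^ (p - 1) / (p - 1) := by
  rw [int_eq n p hn (by linarith)]
  have hn0 : (0:ℝ) < n := by linarith
  have h : (1 - n ^ (p - 1)) / (1 - p) = (n ^ (p - 1) - 1) / (p - 1) := by
    rw [← neg_div_neg_eq]; ring_nf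
  rw [h]
  gcongr
  · linarith

lemma int_pos (n q : ℝ) (hn : 1 < n) (hq0 : 0 ≤ q) :
    0 ≤ ∫ t in Icc (1 / n) 1, t ^ (-q) :=
  setIntegral_nonneg measurableSet_Icc fun t ht =>
    Real.rpow_nonneg (le_trans (by positivity) ht.1) _

lemma integrableOn_rpow_neg (n r : ℝ) (hn : 1 < n) :
    IntegrableOn (fun t : ℝ => t ^ (-r)) (Icc (1 / n) 1) := by
  have hn0 : (0:ℝ) < n := by linarith
  refine ContinuousOn.integrableOn_compact isCompact_Icc ?_
  exact continuousOn_id.rpow_const fun x hx =>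
    Or.inl (ne_of_gt (lt_of_lt_of_le (by positivity) hx.1))

lemma meas_f (a b δ n : ℝ) :
    Measurable (fun st : ℝ × ℝ =>
      min 1 ((min st.1 st.2) ^ (-a) * (max st.1 st.2) ^ (-b) * n ^ (-δ))) := by
  measurability

lemma main_bound (a b p q δ n : ℝ) (ha0 : 0 ≤ a) (hb0 : 0 ≤ b) (hδ0 : 0 ≤ δ)
    (hq0 : 0 ≤ q) (hqb : q ≤ b) (hq1 : q < 1) (hp1 : 1 < p) (hpq : a + b ≤ p + q)
    (hn : 1 < n) :
    n ^ (-δ) * (1 - 1/n)^2 ≤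
      (∫ s in Icc (1/n) 1, ∫ t in Icc (1/n) 1,
        min 1 ((min s t) ^ (-a) * (max s t) ^ (-b) * n ^ (-δ))) ∧
      (∫ s in Icc (1/n) 1, ∫ t in Icc (1/n) 1,
        min 1 ((min s t) ^ (-a) * (max s t) ^ (-b) * n ^ (-δ)))
        ≤ (2 / ((p-1)*(1-q))) * n ^ (p - 1 - δ) := by
  have hn0 : (0:ℝ) < n := by linarith
  set S := Icc (1/n) 1 with hS
  have h0n : (0:ℝ) < 1/n := by positivity
  have hle : 1/n ≤ 1 := by rw [div_le_one hn0]; linarith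
  have ms : MeasurableSet S := measurableSet_Icc
  have hvol : volume S = ENNReal.ofReal (1 - 1/n) := by rw [hS, Real.volume_Icc]
  have hfin : volume S < ⊤ := by rw [hvol]; exact ENNReal.ofReal_lt_top
  have hvolR : (volume S).toReal = 1 - 1/n := by
    rw [hvol, ENNReal.toReal_ofReal (by linarith)]
  set f : ℝ → ℝ → ℝ := fun s t =>
    min 1 ((min s t) ^ (-a) * (max s t) ^ (-b) * n ^ (-δ)) with hf
  have hw : (0:ℝ) ≤ n ^ (-δ) := Real.rpow_nonneg hn0.le _
  have hw1 : n ^ (-δ) ≤ 1 := Real.rpow_le_one_of_one_le_of_nonpos hn.le (by linarith)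
  -- pointwise facts on S
  have hpos : ∀ s ∈ S, ∀ t ∈ S, n ^ (-δ) ≤ f s t := by
    intro s hs t ht
    have hs0 : 0 < s := lt_of_lt_of_le h0n hs.1
    have ht0 : 0 < t := lt_of_lt_of_le h0n ht.1
    refine le_min hw1 ?_
    have h1 : 1 ≤ (min s t) ^ (-a) :=
      Real.one_le_rpow_of_pos_of_le_one_of_nonpos (lt_min hs0 ht0)
        (min_le_of_left_le hs.2) (by linarith)
    have h2 : 1 ≤ (max s t) ^ (-b) :=
      Real.one_le_rpow_of_pos_of_le_one_of_nonpos (lt_of_lt_of_le hs0 (le_max_left _ _))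
        (max_le hs.2 ht.2) (by linarith)
    have hAB : 1 * 1 ≤ (min s t) ^ (-a) * (max s t) ^ (-b) :=
      mul_le_mul h1 h2 zero_le_one (le_trans zero_le_one h1)
    calc n ^ (-δ) = 1 * n ^ (-δ) := by ring
      _ ≤ ((min s t) ^ (-a) * (max s t) ^ (-b)) * n ^ (-δ) :=
          mul_le_mul_of_nonneg_right (by linarith) hw
      _ = (min s t) ^ (-a) * (max s t) ^ (-b) * n ^ (-δ) := by ring
  have hf01 : ∀ s ∈ S, ∀ t ∈ S, 0 ≤ f s t ∧ f s t ≤ 1 := fun s hs t ht =>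
    ⟨le_trans hw (hpos s hs t ht), min_le_left _ _⟩
  -- integrability of f s
  have hmeasf : ∀ s : ℝ, Measurable (f s) := fun s =>
    (meas_f a b δ n).comp (measurable_const.prodMk measurable_id)
  have hfint : ∀ s ∈ S, IntegrableOn (f s) S := by
    intro s hs
    refine Integrable.mono' (g := fun _ => (1:ℝ))
      (integrableOn_const hfin.ne) (hmeasf s).aestronglyMeasurable ?_
    rw [ae_restrict_iff' ms]
    exact ae_of_all _ fun t ht => by
      rcases hf01 s hs t ht with ⟨h1, h2⟩
      rw [Real.norm_eq_abs, abs_of_nonneg h1]; exact h2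
  -- F and its integrability
  set F : ℝ → ℝ := fun s => ∫ t in S, f s t with hF
  have hFsm : MeasureTheory.StronglyMeasurable F :=
    (meas_f a b δ n).stronglyMeasurable.integral_prod_right'
  have hFnn : ∀ s ∈ S, 0 ≤ F s := fun s hs =>
    setIntegral_nonneg ms fun t ht => (hf01 s hs t ht).1
  have hFle : ∀ s ∈ S, F s ≤ 1 := by
    intro s hs
    calc F s ≤ ‖F s‖ := le_abs_self _
      _ ≤ 1 * (volume S).toReal := by
          refine norm_setIntegral_le_of_norm_le_const hfin fun t ht => ?_
          rcases hf01 s hs t ht with ⟨h1, h2⟩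
          rw [Real.norm_eq_abs, abs_of_nonneg h1]; exact h2
      _ ≤ 1 := by rw [hvolR]; nlinarith
  have hFint : IntegrableOn F S := by
    refine Integrable.mono' (g := fun _ => (1:ℝ))
      (integrableOn_const hfin.ne) hFsm.aestronglyMeasurable ?_
    rw [ae_restrict_iff' ms]
    exact ae_of_all _ fun s hs => by
      rw [Real.norm_eq_abs, abs_of_nonneg (hFnn s hs)]; exact hFle s hs
  constructor
  · -- lower bound
    have step : ∀ s ∈ S, (1 - 1/n) * n ^ (-δ) ≤ F s := by
      intro s hs
      have : ∫ t in S, n ^ (-δ) ≤ F s :=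
        setIntegral_mono_on (integrableOn_const hfin.ne) (hfint s hs) ms
          (fun t ht => hpos s hs t ht)
      rwa [setIntegral_const, Measure.real, hvolR, smul_eq_mul] at this
    have : ∫ s in S, ((1 - 1/n) * n ^ (-δ)) ≤ ∫ s in S, F s :=
      setIntegral_mono_on (integrableOn_const hfin.ne) hFint ms step
    rw [setIntegral_const, Measure.real, hvolR, smul_eq_mul] at this
    calc n ^ (-δ) * (1 - 1/n)^2 = (1 - 1/n) * ((1 - 1/n) * n ^ (-δ)) := by ring
      _ ≤ ∫ s in S, F s := this
  · -- upper bound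
    set Aq := ∫ t in S, t ^ (-q) with hAq
    set Ap := ∫ t in S, t ^ (-p) with hAp
    have hAq0 : 0 ≤ Aq := int_pos n q hn hq0
    have hAp0 : 0 ≤ Ap := int_pos n p hn (by linarith)
    have hAqle : Aq ≤ 1 / (1 - q) := intA n q hn hq0 hq1
    have hAple : Ap ≤ n ^ (p-1) / (p-1) := intB n p hn hp1
    have hintq : IntegrableOn (fun t : ℝ => t ^ (-q)) S := integrableOn_rpow_neg n q hn
    have hintp : IntegrableOn (fun t : ℝ => t ^ (-p)) S := integrableOn_rpow_neg n p hn
    have step1 : ∀ s ∈ S, F s ≤ n ^ (-δ) * s ^ (-p) * Aq + n ^ (-δ) * s ^ (-q) * Ap := by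
      intro s hs
      have hs0 : 0 < s := lt_of_lt_of_le h0n hs.1
      have hg : ∀ t : ℝ, (n ^ (-δ) * s ^ (-p)) * t ^ (-q) + (n ^ (-δ) * s ^ (-q)) * t ^ (-p)
          = (s ^ (-p) * t ^ (-q) + s ^ (-q) * t ^ (-p)) * n ^ (-δ) := fun t => by ring
      have hmono : F s ≤ ∫ t in S,
          ((n ^ (-δ) * s ^ (-p)) * t ^ (-q) + (n ^ (-δ) * s ^ (-q)) * t ^ (-p)) := by
        refine integral_mono_of_nonneg ?_ ((hintq.const_mul _).add (hintp.const_mul _)) ?_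
        · filter_upwards [ae_restrict_mem ms] with t ht
          exact (hf01 s hs t ht).1
        · filter_upwards [ae_restrict_mem ms] with t ht
          have ht0 : 0 < t := lt_of_lt_of_le h0n ht.1
          rw [hg t]
          exact pt_bound ha0 hb0 hqb hpq hw hs0 hs.2 ht0 ht.2
      rwa [integral_add (hintq.const_mul _) (hintp.const_mul _),
        integral_const_mul, integral_const_mul] at hmono
    have step2 : ∫ s in S, F s ≤
        ∫ s in S, (n ^ (-δ) * Aq * s ^ (-p) + n ^ (-δ) * Ap * s ^ (-q)) := by
      refine integral_mono_of_nonneg ?_ ((hintp.const_mul _).add (hintq.const_mul _)) ?_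
      · filter_upwards [ae_restrict_mem ms] with s hs
        exact hFnn s hs
      · filter_upwards [ae_restrict_mem ms] with s hs
        calc F s ≤ n ^ (-δ) * s ^ (-p) * Aq + n ^ (-δ) * s ^ (-q) * Ap := step1 s hs
          _ = n ^ (-δ) * Aq * s ^ (-p) + n ^ (-δ) * Ap * s ^ (-q) := by ring
    rw [integral_add (hintp.const_mul _) (hintq.const_mul _),
      integral_const_mul, integral_const_mul] at step2
    have hfinal : n ^ (-δ) * Aq * Ap + n ^ (-δ) * Ap * Aq
        ≤ (2 / ((p-1)*(1-q))) * n ^ (p - 1 - δ) := by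
      have h1 : n ^ (-δ) * Aq * Ap ≤ n ^ (-δ) * (1/(1-q)) * (n ^ (p-1)/(p-1)) := by
        have hq' : (0:ℝ) < 1 - q := by linarith
        have := mul_le_mul hAqle hAple hAp0 (by positivity)
        nlinarith
      have hnpq : n ^ (-δ) * n ^ (p-1) = n ^ (p - 1 - δ) := by
        rw [← Real.rpow_add hn0]; ring_nf
      have h2 : n ^ (-δ) * (1/(1-q)) * (n ^ (p-1)/(p-1))
          = (1 / ((p-1)*(1-q))) * n ^ (p - 1 - δ) := by
        rw [← hnpq]; field_simp
      calc n ^ (-δ) * Aq * Ap + n ^ (-δ) * Ap * Aq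
          = 2 * (n ^ (-δ) * Aq * Ap) := by ring
        _ ≤ 2 * (n ^ (-δ) * (1/(1-q)) * (n ^ (p-1)/(p-1))) := by linarith [h1]
        _ = (2 / ((p-1)*(1-q))) * n ^ (p - 1 - δ) := by rw [h2]; ring
    exact le_trans step2 hfinal

set_option maxHeartbeats 1000000

/-- The `δ_eff > 2` region of the phase diagram (Figure 1): for `δ > 2`,
`0 ≤ γ < 1 - 1/δ` and `0 ≤ γ' < 1 - γ`, the effective decay exponent of the
weight-dependent random connection model with interpolation kernel exceeds `2`:
`liminf_{n→∞} -log I(n)/log n > 2` for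
`I(n) = ∫∫_{[1/n,1]²} min(1, (s∧t)^(-γδ)(s∨t)^(-γ'δ) n^(-δ)) ds dt`. -/
theorem deff_gt_two_region (δ γ γ' : ℝ) (hδ : 2 < δ)
    (hγ0 : 0 ≤ γ) (hγ : γ < 1 - 1 / δ) (hγ'0 : 0 ≤ γ') (hγ' : γ' < 1 - γ) :
    2 < liminf (fun n : ℝ =>
      -Real.log (∫ s in Set.Icc (1 / n) 1, ∫ t in Set.Icc (1 / n) 1,
          min 1 ((min s t) ^ (-(γ * δ)) * (max s t) ^ (-(γ' * δ)) * n ^ (-δ)))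
        / Real.log n) atTop := by
  have hδ0 : (0:ℝ) < δ := by linarith
  set a := γ * δ with ha
  set b := γ' * δ with hb
  have ha0 : 0 ≤ a := mul_nonneg hγ0 hδ0.le
  have hb0 : 0 ≤ b := mul_nonneg hγ'0 hδ0.le
  have haδ : a < δ - 1 := by
    have := mul_lt_mul_of_pos_right hγ hδ0
    have h1 : (1 - 1/δ) * δ = δ - 1 := by field_simp
    rw [h1] at this; exact this
  have hab : a + b < δ := by
    have := mul_lt_mul_of_pos_right hγ' hδ0
    nlinarith
  set ε := min ((δ - a - b)/2) (1/2) with hε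
  have hε0 : 0 < ε := lt_min (by linarith) (by norm_num)
  have hε1 : ε ≤ 1/2 := min_le_right _ _
  have hε2 : ε ≤ (δ - a - b)/2 := min_le_left _ _
  set q := min b (1 - ε) with hq
  have hq0 : 0 ≤ q := le_min hb0 (by linarith)
  have hqb : q ≤ b := min_le_left _ _
  have hq1 : q < 1 := lt_of_le_of_lt (min_le_right _ _) (by linarith)
  set ε' := min ε ((δ - 2)/2) with hε'
  have hε'0 : 0 < ε' := lt_min hε0 (by linarith)
  have hε'2 : ε' ≤ (δ - 2)/2 := min_le_right _ _
  set p := max (a + b - q) (1 + ε') with hp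
  have hp1 : 1 < p := lt_of_lt_of_le (by linarith) (le_max_right _ _)
  have hpq : a + b ≤ p + q := by
    have := le_max_left (a + b - q) (1 + ε'); linarith
  have hpδ : p < δ - 1 := by
    apply max_lt
    · rcases min_choice b (1 - ε) with h | h
      · rw [hq, h]; linarith
      · rw [hq, h]; linarith
    · linarith
  set c := δ + 1 - p with hc
  have hc2 : 2 < c := by simp only [hc]; linarith
  set C := 2 / ((p - 1) * (1 - q)) with hC
  have hC0 : 0 < C := by
    apply div_pos (by norm_num)
    apply mul_pos <;> linarith
  have key : ∀ n : ℝ, 1 < n →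
      n ^ (-δ) * (1 - 1/n)^2 ≤
        (∫ s in Set.Icc (1/n) 1, ∫ t in Set.Icc (1/n) 1,
          min 1 ((min s t) ^ (-a) * (max s t) ^ (-b) * n ^ (-δ))) ∧
      (∫ s in Set.Icc (1/n) 1, ∫ t in Set.Icc (1/n) 1,
          min 1 ((min s t) ^ (-a) * (max s t) ^ (-b) * n ^ (-δ)))
        ≤ C * n ^ (p - 1 - δ) :=
    fun n hn => main_bound a b p q δ n ha0 hb0 hδ0.le hq0 hqb hq1 hp1 hpq hn
  set M := max 1 ((2/(c - 2)) * Real.log C) with hM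
  have hev : ∀ᶠ n in atTop, (2 + c)/2 ≤
      -Real.log (∫ s in Set.Icc (1/n) 1, ∫ t in Set.Icc (1/n) 1,
          min 1 ((min s t) ^ (-a) * (max s t) ^ (-b) * n ^ (-δ)))
        / Real.log n := by
    filter_upwards [eventually_gt_atTop 1, Real.tendsto_log_atTop.eventually_ge_atTop M]
      with n hn1 hMn
    have hn0 : (0:ℝ) < n := by linarith
    have hlog1 : 1 ≤ Real.log n := le_trans (le_max_left _ _) hMn
    have hlogpos : 0 < Real.log n := by linarith
    have hlogC : (2/(c - 2)) * Real.log C ≤ Real.log n :=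
      le_trans (le_max_right _ _) hMn
    obtain ⟨hlow, hup⟩ := key n hn1
    have hI0 : 0 < (∫ s in Set.Icc (1/n) 1, ∫ t in Set.Icc (1/n) 1,
        min 1 ((min s t) ^ (-a) * (max s t) ^ (-b) * n ^ (-δ))) := by
      refine lt_of_lt_of_le ?_ hlow
      have h1 : 0 < 1 - 1/n := by
        have : 1/n < 1 := by rw [div_lt_one hn0]; linarith
        linarith
      positivity
    have hrp : (0:ℝ) < n ^ (p - 1 - δ) := Real.rpow_pos_of_pos hn0 _
    have hlogI : Real.log (∫ s in Set.Icc (1/n) 1, ∫ t in Set.Icc (1/n) 1,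
        min 1 ((min s t) ^ (-a) * (max s t) ^ (-b) * n ^ (-δ)))
        ≤ Real.log C + (p - 1 - δ) * Real.log n := by
      refine le_trans (Real.log_le_log hI0 hup) ?_
      rw [Real.log_mul (ne_of_gt hC0) (ne_of_gt hrp), Real.log_rpow hn0]
    rw [le_div_iff₀ hlogpos]
    have hCle : Real.log C ≤ (c - 2)/2 * Real.log n := by
      have h := mul_le_mul_of_nonneg_left hlogC (by linarith : (0:ℝ) ≤ (c - 2)/2)
      have hcne : c - 2 ≠ 0 := by linarith
      have heq : (c - 2)/2 * (2/(c - 2) * Real.log C) = Real.log C := by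
        field_simp
      linarith
    linarith
  have hub : ∀ᶠ n in atTop, (fun n : ℝ =>
      -Real.log (∫ s in Set.Icc (1/n) 1, ∫ t in Set.Icc (1/n) 1,
          min 1 ((min s t) ^ (-a) * (max s t) ^ (-b) * n ^ (-δ)))
        / Real.log n) n ≤ δ + 3 := by
    filter_upwards [eventually_ge_atTop 2, Real.tendsto_log_atTop.eventually_ge_atTop 1]
      with n hn2 hlog1
    have hn1 : (1:ℝ) < n := by linarith
    have hn0 : (0:ℝ) < n := by linarith
    have hlogpos : (0:ℝ) < Real.log n := by linarith
    obtain ⟨hlow, -⟩ := key n hn1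
    have hhalf : (1:ℝ)/2 ≤ 1 - 1/n := by
      have : 1/n ≤ 1/2 := by
        rw [div_le_div_iff₀ hn0 (by norm_num)]; linarith
      linarith
    have hrp : (0:ℝ) < n ^ (-δ) := Real.rpow_pos_of_pos hn0 _
    have hsq : ((1:ℝ)/2)^2 ≤ (1 - 1/n)^2 :=
      pow_le_pow_left₀ (by norm_num) hhalf 2
    have hq4 : n ^ (-δ) / 4 ≤ (∫ s in Set.Icc (1/n) 1, ∫ t in Set.Icc (1/n) 1,
        min 1 ((min s t) ^ (-a) * (max s t) ^ (-b) * n ^ (-δ))) := by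
      refine le_trans ?_ hlow
      calc n ^ (-δ) / 4 = n ^ (-δ) * ((1:ℝ)/2)^2 := by ring
        _ ≤ n ^ (-δ) * (1 - 1/n)^2 := mul_le_mul_of_nonneg_left hsq hrp.le
    have hlogI : -δ * Real.log n - Real.log 4 ≤ Real.log (∫ s in Set.Icc (1/n) 1,
        ∫ t in Set.Icc (1/n) 1,
        min 1 ((min s t) ^ (-a) * (max s t) ^ (-b) * n ^ (-δ))) := by
      refine le_trans (le_of_eq ?_) (Real.log_le_log (by positivity) hq4)
      rw [div_eq_mul_inv, Real.log_mul (ne_of_gt hrp) (by norm_num),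
        Real.log_rpow hn0, Real.log_inv]
      ring
    have hlog4 : Real.log 4 ≤ 3 := by
      have := Real.log_le_sub_one_of_pos (by norm_num : (0:ℝ) < 4); linarith
    rw [div_le_iff₀ hlogpos]
    nlinarith [hlogI, hlog4, hlog1]
  have cobdd : IsCoboundedUnder (· ≥ ·) atTop (fun n : ℝ =>
      -Real.log (∫ s in Set.Icc (1/n) 1, ∫ t in Set.Icc (1/n) 1,
          min 1 ((min s t) ^ (-a) * (max s t) ^ (-b) * n ^ (-δ)))
        / Real.log n) :=
    Filter.isCoboundedUnder_ge_of_eventually_le atTop hub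
  exact lt_of_lt_of_le (by linarith) (le_liminf_of_le cobdd hev)
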